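/- Let G = (V,E) be a finite tree with root r, oriented toward r, and for each candidate set T_i (i ∈ [q]) add a new source node s_i with arcs from s_i to every element of T_i; let D be the resulting digraph and M the gammoid on ground set V with sources S = {s_1,...,s_q}. Then for Z ⊆ V \ {r}, the edge set C = {e(v) : v ∈ Z} (where e(v) is the unique tree edge leaving v toward r) is a good cut — i.e., there exist distinct indices i_1,...,i_{|Z|+1} and representatives t_{i_m} ∈ T_{i_m} lying in pairwise distinct components of G − C, one per component of G − C — if and only if Z ∪ {r} is independent in M. -/

import Mathlib

open scoped Classical

section TreeGammoid
variable {V : Type*}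

theorem tree_parent_unique (G : SimpleGraph V) (hG : G.IsTree) (r : V) (parent : V → V)
    (hpar : ∀ v, v ≠ r → G.Adj v (parent v) ∧ G.dist (parent v) r + 1 = G.dist v r)
    {u w : V} (h : G.Adj u w) (hle : G.dist u r ≤ G.dist w r) :
    w ≠ r ∧ parent w = u := by
  have hconn := hG.isConnected
  obtain ⟨p0, hp0⟩ := hconn.exists_walk_length_eq_dist u r
  set pu := p0.bypass with hpu_def
  have hpu : pu.IsPath := p0.bypass_isPath
  have hlen : pu.length = G.dist u r :=
    le_antisymm (hp0 ▸ p0.length_bypass_le) (SimpleGraph.dist_le _)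
  have hwsup : w ∉ pu.support := by
    intro hw
    have hspec := SimpleGraph.Walk.take_spec pu hw
    have hlen2 : (pu.takeUntil w hw).length + (pu.dropUntil w hw).length = pu.length := by
      conv_rhs => rw [← hspec]
      rw [SimpleGraph.Walk.length_append]
    have hd1 : G.dist w r ≤ (pu.dropUntil w hw).length := SimpleGraph.dist_le _
    have htake0 : (pu.takeUntil w hw).length = 0 := by omega
    exact h.ne (SimpleGraph.Walk.eq_of_length_eq_zero htake0)
  have hq : (SimpleGraph.Walk.cons h.symm pu).IsPath := hpu.cons hwsup
  have hwr : w ≠ r := by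
    intro hwr
    subst hwr
    have : G.dist u w = 0 := le_antisymm (by simpa [SimpleGraph.dist_self] using hle) (Nat.zero_le _)
    exact h.ne (hconn.dist_eq_zero_iff.mp this)
  obtain ⟨hadj, hdist⟩ := hpar w hwr
  obtain ⟨p1, hp1⟩ := hconn.exists_walk_length_eq_dist (parent w) r
  set pw := p1.bypass with hpw_def
  have hpw : pw.IsPath := p1.bypass_isPath
  have hlen' : pw.length = G.dist (parent w) r :=
    le_antisymm (hp1 ▸ p1.length_bypass_le) (SimpleGraph.dist_le _)
  have hwsup' : w ∉ pw.support := by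
    intro hw
    have hd1 : G.dist w r ≤ (pw.dropUntil w hw).length := SimpleGraph.dist_le _
    have hlen2 : (pw.takeUntil w hw).length + (pw.dropUntil w hw).length = pw.length := by
      conv_rhs => rw [← SimpleGraph.Walk.take_spec pw hw]
      rw [SimpleGraph.Walk.length_append]
    omega
  have hq' : (SimpleGraph.Walk.cons hadj pw).IsPath := hpw.cons hwsup'
  have heq := (hG.existsUnique_path w r).unique hq hq'
  have h1 : (SimpleGraph.Walk.cons h.symm pu).getVert 1 = u := by
    rw [SimpleGraph.Walk.getVert_cons _ _ (by norm_num)]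
    exact SimpleGraph.Walk.getVert_zero _
  have h2 : (SimpleGraph.Walk.cons hadj pw).getVert 1 = parent w := by
    rw [SimpleGraph.Walk.getVert_cons _ _ (by norm_num)]
    exact SimpleGraph.Walk.getVert_zero _
  rw [heq, h2] at h1
  exact ⟨hwr, h1⟩

theorem par_edge_inj (G : SimpleGraph V) (r : V) (parent : V → V)
    (hpar : ∀ v, v ≠ r → G.Adj v (parent v) ∧ G.dist (parent v) r + 1 = G.dist v r)
    {a b : V} (ha : a ≠ r) (hb : b ≠ r)
    (h : s(a, parent a) = s(b, parent b)) : a = b := by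
  rw [Sym2.eq_iff] at h
  rcases h with ⟨h1, _⟩ | ⟨h1, h2⟩
  · exact h1
  · have da := (hpar a ha).2
    have db := (hpar b hb).2
    rw [← h1] at db
    rw [h2] at da
    omega

theorem cut_mem_iff (G : SimpleGraph V) (r : V) (Z : Finset V) (parent : V → V)
    (hpar : ∀ v, v ≠ r → G.Adj v (parent v) ∧ G.dist (parent v) r + 1 = G.dist v r)
    (hZ : r ∉ Z) {a : V} (ha : a ≠ r) [DecidableEq V] :
    s(a, parent a) ∈ (↑(Z.image fun v => s(v, parent v)) : Set (Sym2 V)) ↔ a ∈ Z := by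
  constructor
  · intro h
    rw [Finset.mem_coe, Finset.mem_image] at h
    obtain ⟨z, hz, hzz⟩ := h
    have := par_edge_inj G r parent hpar (fun hr => hZ (hr ▸ hz)) ha hzz
    exact this ▸ hz
  · intro h
    rw [Finset.mem_coe, Finset.mem_image]
    exact ⟨a, h, rfl⟩

theorem step_adj (G : SimpleGraph V) (r : V) (Z : Finset V) (parent : V → V)
    (hpar : ∀ v, v ≠ r → G.Adj v (parent v) ∧ G.dist (parent v) r + 1 = G.dist v r)
    (hZ : r ∉ Z) {a : V} (ha : a ≠ r) (haZ : a ∉ Z) [DecidableEq V] :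
    (G.deleteEdges ↑(Z.image fun v => s(v, parent v))).Adj a (parent a) := by
  rw [SimpleGraph.deleteEdges_adj]
  exact ⟨(hpar a ha).1, fun hc => haZ ((cut_mem_iff G r Z parent hpar hZ ha).mp hc)⟩

noncomputable def gchain (G : SimpleGraph V) (r : V) (Z : Finset V) (parent : V → V)
    (hd : ∀ v, v ≠ r → G.dist (parent v) r + 1 = G.dist v r) (u : V) : List V :=
  if u ∈ Z ∨ u = r then [u]
  else u :: gchain G r Z parent hd (parent u)
termination_by G.dist u r
decreasing_by
  have := hd u (by tauto)
  omega

noncomputable def ganchor (G : SimpleGraph V) (r : V) (Z : Finset V) (parent : V → V)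
    (hd : ∀ v, v ≠ r → G.dist (parent v) r + 1 = G.dist v r) (u : V) : V :=
  if u ∈ Z ∨ u = r then u
  else ganchor G r Z parent hd (parent u)
termination_by G.dist u r
decreasing_by
  have := hd u (by tauto)
  omega

theorem ganchor_fix (G : SimpleGraph V) (r : V) (Z : Finset V) (parent : V → V)
    (hd : ∀ v, v ≠ r → G.dist (parent v) r + 1 = G.dist v r) {u : V}
    (h : u ∈ Z ∨ u = r) : ganchor G r Z parent hd u = u := by
  rw [ganchor, if_pos h]

theorem ganchor_step (G : SimpleGraph V) (r : V) (Z : Finset V) (parent : V → V)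
    (hd : ∀ v, v ≠ r → G.dist (parent v) r + 1 = G.dist v r) {u : V}
    (h : ¬(u ∈ Z ∨ u = r)) :
    ganchor G r Z parent hd u = ganchor G r Z parent hd (parent u) := by
  conv_lhs => rw [ganchor]
  rw [if_neg h]

theorem ganchor_mem (G : SimpleGraph V) (r : V) (Z : Finset V) (parent : V → V)
    (hd : ∀ v, v ≠ r → G.dist (parent v) r + 1 = G.dist v r) (u : V) :
    ganchor G r Z parent hd u ∈ Z ∨ ganchor G r Z parent hd u = r := by
  suffices H : ∀ n u, G.dist u r ≤ n →
      ganchor G r Z parent hd u ∈ Z ∨ ganchor G r Z parent hd u = r from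
    H (G.dist u r) u le_rfl
  intro n
  induction n with
  | zero =>
    intro u hu
    by_cases h : u ∈ Z ∨ u = r
    · rw [ganchor_fix _ _ _ _ _ h]; exact h
    · have := hd u (by tauto); omega
  | succ n ih =>
    intro u hu
    by_cases h : u ∈ Z ∨ u = r
    · rw [ganchor_fix _ _ _ _ _ h]; exact h
    · rw [ganchor_step _ _ _ _ _ h]
      have := hd u (by tauto)
      exact ih (parent u) (by omega)

theorem gchain_spec (G : SimpleGraph V) [DecidableEq V] (r : V) (Z : Finset V)
    (parent : V → V)
    (hd : ∀ v, v ≠ r → G.dist (parent v) r + 1 = G.dist v r)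
    (hpar : ∀ v, v ≠ r → G.Adj v (parent v) ∧ G.dist (parent v) r + 1 = G.dist v r)
    (hZ : r ∉ Z) (u : V) :
    (gchain G r Z parent hd u).head? = some u ∧
    (gchain G r Z parent hd u).getLast? =
      some (ganchor G r Z parent hd u) ∧
    List.Chain' (fun a b => a ≠ r ∧ a ∉ Z ∧ b = parent a)
      (gchain G r Z parent hd u) ∧
    ∀ w ∈ gchain G r Z parent hd u,
      (G.deleteEdges ↑(Z.image fun v => s(v, parent v))).Reachable u w := by
  suffices H : ∀ n u, G.dist u r ≤ n →
      (gchain G r Z parent hd u).head? = some u ∧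
      (gchain G r Z parent hd u).getLast? = some (ganchor G r Z parent hd u) ∧
      List.Chain' (fun a b => a ≠ r ∧ a ∉ Z ∧ b = parent a) (gchain G r Z parent hd u) ∧
      ∀ w ∈ gchain G r Z parent hd u,
        (G.deleteEdges ↑(Z.image fun v => s(v, parent v))).Reachable u w from
    H (G.dist u r) u le_rfl
  intro n
  induction n with
  | zero =>
    intro u hu
    by_cases h : u ∈ Z ∨ u = r
    · rw [gchain, if_pos h, ganchor_fix _ _ _ _ _ h]
      refine ⟨rfl, rfl, by simp [List.Chain'], ?_⟩
      intro w hw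
      simp only [List.mem_singleton] at hw
      rw [hw]
    · have := hd u (by tauto); omega
  | succ n ih =>
    intro u hu
    by_cases h : u ∈ Z ∨ u = r
    · rw [gchain, if_pos h, ganchor_fix _ _ _ _ _ h]
      refine ⟨rfl, rfl, by simp [List.Chain'], ?_⟩
      intro w hw
      simp only [List.mem_singleton] at hw
      rw [hw]
    · push_neg at h
      obtain ⟨huZ, hur⟩ := h
      have hdd := hd u hur
      obtain ⟨hh, hl, hc, hr⟩ := ih (parent u) (by omega)
      have hne : gchain G r Z parent hd (parent u) ≠ [] := by
        intro hcontra; rw [hcontra] at hh; simp at hh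
      have hadj : (G.deleteEdges ↑(Z.image fun v => s(v, parent v))).Adj u (parent u) :=
        step_adj G r Z parent hpar hZ hur huZ
      rw [gchain, if_neg (by tauto), ganchor_step _ _ _ _ _ (by tauto)]
      obtain ⟨b, t, hbt⟩ := List.exists_cons_of_ne_nil hne
      refine ⟨rfl, ?_, ?_, ?_⟩
      · rw [hbt, List.getLast?_cons_cons, ← hbt, hl]
      · rw [List.Chain', List.isChain_cons]
        refine ⟨?_, hc⟩
        intro y hy
        rw [hh] at hy
        simp only [Option.mem_def, Option.some.injEq] at hy
        exact ⟨hur, huZ, hy ▸ rfl⟩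
      · intro w hw
        rcases List.mem_cons.mp hw with hw | hw
        · rw [hw]
        · exact (hadj.reachable).trans (hr w hw)

end TreeGammoid
section TreeGammoid2
variable {V : Type*}

theorem ganchor_adj_le (G : SimpleGraph V) [DecidableEq V] (hG : G.IsTree) (r : V) (Z : Finset V)
    (parent : V → V)
    (hd : ∀ v, v ≠ r → G.dist (parent v) r + 1 = G.dist v r)
    (hpar : ∀ v, v ≠ r → G.Adj v (parent v) ∧ G.dist (parent v) r + 1 = G.dist v r)
    (hZ : r ∉ Z) {u w : V}
    (h : (G.deleteEdges ↑(Z.image fun v => s(v, parent v))).Adj u w)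
    (hle : G.dist u r ≤ G.dist w r) :
    ganchor G r Z parent hd u =
      ganchor G r Z parent hd w := by
  rw [SimpleGraph.deleteEdges_adj] at h
  obtain ⟨hadj, hcut⟩ := h
  obtain ⟨hwr, hpw⟩ := tree_parent_unique G hG r parent hpar hadj hle
  have hwZ : w ∉ Z := by
    intro hwZ
    apply hcut
    have : s(w, parent w) = s(u, w) := by rw [hpw, Sym2.eq_swap]
    rw [← this]
    exact (cut_mem_iff G r Z parent hpar hZ hwr).mpr hwZ
  have hstep := ganchor_step G r Z parent hd (u := w) (by tauto)
  rw [hstep, hpw]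

theorem ganchor_adj (G : SimpleGraph V) [DecidableEq V] (hG : G.IsTree) (r : V) (Z : Finset V)
    (parent : V → V)
    (hd : ∀ v, v ≠ r → G.dist (parent v) r + 1 = G.dist v r)
    (hpar : ∀ v, v ≠ r → G.Adj v (parent v) ∧ G.dist (parent v) r + 1 = G.dist v r)
    (hZ : r ∉ Z) {u w : V}
    (h : (G.deleteEdges ↑(Z.image fun v => s(v, parent v))).Adj u w) :
    ganchor G r Z parent hd u =
      ganchor G r Z parent hd w := by
  rcases le_total (G.dist u r) (G.dist w r) with hle | hle
  · exact ganchor_adj_le G hG r Z parent hd hpar hZ h hle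
  · exact (ganchor_adj_le G hG r Z parent hd hpar hZ h.symm hle).symm

theorem ganchor_reach (G : SimpleGraph V) [DecidableEq V] (hG : G.IsTree) (r : V) (Z : Finset V)
    (parent : V → V)
    (hd : ∀ v, v ≠ r → G.dist (parent v) r + 1 = G.dist v r)
    (hpar : ∀ v, v ≠ r → G.Adj v (parent v) ∧ G.dist (parent v) r + 1 = G.dist v r)
    (hZ : r ∉ Z) {u w : V}
    (h : (G.deleteEdges ↑(Z.image fun v => s(v, parent v))).Reachable u w) :
    ganchor G r Z parent hd u =
      ganchor G r Z parent hd w := by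
  obtain ⟨p⟩ := h
  induction p with
  | nil => rfl
  | cons hadj p ih => exact (ganchor_adj G hG r Z parent hd hpar hZ hadj).trans ih

theorem mem_distinct (G : SimpleGraph V) [DecidableEq V] (hG : G.IsTree) (r : V) (Z : Finset V)
    (parent : V → V)
    (hd : ∀ v, v ≠ r → G.dist (parent v) r + 1 = G.dist v r)
    (hpar : ∀ v, v ≠ r → G.Adj v (parent v) ∧ G.dist (parent v) r + 1 = G.dist v r)
    (hZ : r ∉ Z) {x y : V} (hx : x ∈ insert r Z) (hy : y ∈ insert r Z)
    (h : (G.deleteEdges ↑(Z.image fun v => s(v, parent v))).Reachable x y) : x = y := by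
  have hx' : x ∈ Z ∨ x = r := (Finset.mem_insert.mp hx).symm.imp id (fun h => h)
  have hy' : y ∈ Z ∨ y = r := (Finset.mem_insert.mp hy).symm.imp id (fun h => h)
  calc x = ganchor G r Z parent hd x :=
        (ganchor_fix _ _ _ _ _ hx').symm
    _ = ganchor G r Z parent hd y :=
        ganchor_reach G hG r Z parent hd hpar hZ h
    _ = y := ganchor_fix _ _ _ _ _ hy'

theorem dist_le_chain (G : SimpleGraph V) (r : V) (parent : V → V)
    (hpar : ∀ v, v ≠ r → G.Adj v (parent v) ∧ G.dist (parent v) r + 1 = G.dist v r) :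
    ∀ (l : List V) (z : V), List.Chain' (fun a b => a ≠ r ∧ b = parent a) l →
      l.getLast? = some z → ∀ a ∈ l, G.dist z r ≤ G.dist a r := by
  intro l
  induction l with
  | nil => intro z _ hz; simp at hz
  | cons a t ih =>
    intro z hc hz b hb
    match t, hz with
    | [], hz =>
      simp only [List.getLast?_singleton, Option.some.injEq] at hz
      simp only [List.mem_singleton] at hb
      exact le_of_eq (by rw [hb, hz])
    | c :: t', hz =>
      rw [List.getLast?_cons_cons] at hz
      rw [List.Chain', List.isChain_cons_cons] at hc
      obtain ⟨⟨har, hca⟩, hc⟩ := hc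
      rcases List.mem_cons.mp hb with hb | hb
      · have h1 := ih z hc hz c (List.mem_cons_self)
        have h2 := (hpar a har).2
        rw [← hca] at h2
        rw [hb]
        omega
      · exact ih z hc hz b hb

theorem reach_of_chain (G : SimpleGraph V) [DecidableEq V] (r : V) (Z : Finset V)
    (parent : V → V)
    (hpar : ∀ v, v ≠ r → G.Adj v (parent v) ∧ G.dist (parent v) r + 1 = G.dist v r)
    (hZ : r ∉ Z) :
    ∀ (l : List V) (v z : V), List.Chain' (fun a b => a ≠ r ∧ b = parent a) l →
      l.head? = some v → l.getLast? = some z → (∀ a ∈ l, a ∈ Z → a = z) →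
      (G.deleteEdges ↑(Z.image fun v => s(v, parent v))).Reachable v z := by
  intro l
  induction l with
  | nil => intro v z _ hv; simp at hv
  | cons a t ih =>
    intro v z hc hv hz hmem
    simp only [List.head?_cons, Option.some.injEq] at hv
    subst hv
    match t, hz with
    | [], hz =>
      simp only [List.getLast?_singleton, Option.some.injEq] at hz
      rw [hz]
    | c :: t', hz =>
      rw [List.getLast?_cons_cons] at hz
      rw [List.Chain', List.isChain_cons_cons] at hc
      obtain ⟨⟨har, hca⟩, hc⟩ := hc
      have haZ : a ∉ Z := by
        intro hvZ
        have hvz : a = z := hmem a (List.mem_cons_self) hvZ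
        have h1 := dist_le_chain G r parent hpar (c :: t') z hc hz c (List.mem_cons_self)
        have h2 := (hpar a har).2
        rw [← hca, hvz] at h2
        omega
      have hadj := step_adj G r Z parent hpar hZ har haZ
      rw [← hca] at hadj
      refine hadj.reachable.trans (ih c z hc rfl hz ?_)
      intro b hb hbZ
      exact hmem b (List.mem_cons_of_mem _ hb) hbZ

theorem extract_chain {q : ℕ} (r : V) (parent : V → V) (T : Fin q → Set V)
    (A : (V ⊕ Fin q) → (V ⊕ Fin q) → Prop)
    (hA : ∀ a b, A a b ↔ ((∃ v, v ≠ r ∧ a = Sum.inl v ∧ b = Sum.inl (parent v)) ∨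
        (∃ i, ∃ v ∈ T i, a = Sum.inr i ∧ b = Sum.inl v))) :
    ∀ (m : List (V ⊕ Fin q)), List.Chain' A m → ∀ v : V, m.head? = some (Sum.inl v) →
      ∃ l : List V, m = l.map Sum.inl ∧ l.head? = some v ∧
        List.Chain' (fun a b => a ≠ r ∧ b = parent a) l := by
  intro m
  induction m with
  | nil => intro _ v hv; simp at hv
  | cons a t ih =>
    intro hc v hv
    simp only [List.head?_cons, Option.some.injEq] at hv
    subst hv
    match t with
    | [] => exact ⟨[v], rfl, rfl, List.isChain_singleton v⟩
    | b :: t' =>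
      rw [List.Chain', List.isChain_cons_cons] at hc
      obtain ⟨hab, hc⟩ := hc
      rw [hA] at hab
      rcases hab with ⟨v', hv'r, hv', hb⟩ | ⟨i, w, _, hv', _⟩
      · have hvv : v = v' := by injection hv'
        subst hvv
        obtain ⟨l', hl', hh', hcl'⟩ := ih hc (parent v) (by rw [hb]; rfl)
        refine ⟨v :: l', by rw [hl']; rfl, rfl, ?_⟩
        rw [List.Chain', List.isChain_cons]
        refine ⟨?_, hcl'⟩
        intro y hy
        rw [hh'] at hy
        simp only [Option.mem_def, Option.some.injEq] at hy
        exact ⟨hv'r, hy.symm⟩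
      · exact absurd hv' (by simp)

end TreeGammoid2
section TreeGammoid3
variable {V : Type*}

theorem ganchor_reachable (G : SimpleGraph V) [DecidableEq V] (r : V) (Z : Finset V)
    (parent : V → V) (hd : ∀ v, v ≠ r → G.dist (parent v) r + 1 = G.dist v r)
    (hpar : ∀ v, v ≠ r → G.Adj v (parent v) ∧ G.dist (parent v) r + 1 = G.dist v r)
    (hZ : r ∉ Z) (u : V) :
    (G.deleteEdges ↑(Z.image fun v => s(v, parent v))).Reachable u
      (ganchor G r Z parent hd u) := by
  obtain ⟨hh, hl, _, hr⟩ := gchain_spec G r Z parent hd hpar hZ u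
  apply hr
  obtain ⟨hne, heq⟩ := List.mem_getLast?_eq_getLast (show _ ∈ _ from hl)
  rw [heq]
  exact List.getLast_mem hne

end TreeGammoid3


/-- Tree/gammoid correspondence: for a tree `G` rooted at `r` (edges oriented
toward `r` via `parent`), with candidate sets `T i` and the auxiliary digraph `A`
(sources `Sum.inr i` with arcs into `T i`, and tree arcs `v → parent v`), a set
`Z ⊆ V \ {r}` induces a good cut `C = {e(v) : v ∈ Z}` — i.e. the components of
`G - C` admit representatives from pairwise distinct candidate sets, one per
component — if and only if `Z ∪ {r}` is independent in the gammoid, i.e. there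
are pairwise vertex-disjoint directed paths from the sources onto `Z ∪ {r}`. -/
theorem stmt2 {V : Type*} [Fintype V] [DecidableEq V]
    (G : SimpleGraph V) (hG : G.IsTree) (r : V)
    (q : ℕ) (T : Fin q → Set V)
    (parent : V → V)
    (hpar : ∀ v, v ≠ r → G.Adj v (parent v) ∧ G.dist (parent v) r + 1 = G.dist v r)
    (A : (V ⊕ Fin q) → (V ⊕ Fin q) → Prop)
    (hA : ∀ a b, A a b ↔ ((∃ v, v ≠ r ∧ a = Sum.inl v ∧ b = Sum.inl (parent v)) ∨
        (∃ i, ∃ v ∈ T i, a = Sum.inr i ∧ b = Sum.inl v)))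
    (Z : Finset V) (hZ : r ∉ Z) :
    -- the cut `{e(v) : v ∈ Z}` is good
    (∃ idx : (G.deleteEdges ↑(Z.image fun v => s(v, parent v))).ConnectedComponent → Fin q,
       Function.Injective idx ∧
       ∃ rep : (G.deleteEdges ↑(Z.image fun v => s(v, parent v))).ConnectedComponent → V,
         ∀ K, rep K ∈ T (idx K) ∧ rep K ∈ K.supp)
    ↔ -- `Z ∪ {r}` is independent in the gammoid `M = (D, S, V)`
    (∃ P : V → List (V ⊕ Fin q),
        (∀ x ∈ insert r Z, List.Chain' A (P x) ∧
          (∃ i : Fin q, (P x).head? = some (Sum.inr i)) ∧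
          (P x).getLast? = some (Sum.inl x)) ∧
        (∀ x ∈ insert r Z, ∀ y ∈ insert r Z, x ≠ y → ∀ a ∈ P x, a ∉ P y)) := by
  have hd : ∀ v, v ≠ r → G.dist (parent v) r + 1 = G.dist v r := fun v hv => (hpar v hv).2
  set G' := G.deleteEdges ↑(Z.image fun v => s(v, parent v)) with hG'
  constructor
  · -- forward
    rintro ⟨idx, hinj, rep, hrep⟩
    refine ⟨fun x => Sum.inr (idx (G'.connectedComponentMk x)) ::
        (gchain G r Z parent hd (rep (G'.connectedComponentMk x))).map Sum.inl, ?_, ?_⟩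
    · intro x hx
      set K := G'.connectedComponentMk x with hK
      obtain ⟨hh, hl, hc, hrch⟩ := gchain_spec G r Z parent hd hpar hZ (rep K)
      have hne : gchain G r Z parent hd (rep K) ≠ [] := by
        intro hnil; rw [hnil] at hh; simp at hh
      have hcomp : G'.connectedComponentMk (rep K) = K :=
        (SimpleGraph.ConnectedComponent.mem_supp_iff _ _).mp (hrep K).2
      have hreach : G'.Reachable (rep K) x :=
        SimpleGraph.ConnectedComponent.exact (hcomp.trans hK)
      have hx' : x ∈ Z ∨ x = r := Or.symm (Finset.mem_insert.mp hx)
      have hanch : ganchor G r Z parent hd (rep K) = x := by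
        rw [ganchor_reach G hG r Z parent hd hpar hZ hreach]
        exact ganchor_fix _ _ _ _ _ hx'
      obtain ⟨b, t, hbt⟩ := List.exists_cons_of_ne_nil hne
      refine ⟨?_, ⟨idx K, rfl⟩, ?_⟩
      · rw [List.Chain', List.isChain_cons]
        constructor
        · intro y hy
          rw [List.head?_map, hh] at hy
          simp only [Option.map_some, Option.mem_def, Option.some.injEq] at hy
          rw [← hy]
          exact (hA _ _).mpr (Or.inr ⟨idx K, rep K, (hrep K).1, rfl, rfl⟩)
        · rw [List.isChain_map]
          refine List.IsChain.imp ?_ hc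
          intro a b hab
          exact (hA _ _).mpr (Or.inl ⟨a, hab.1, rfl, by rw [hab.2.2]⟩)
      · show (_ :: _).getLast? = _
        rw [hbt, List.map_cons, List.getLast?_cons_cons, ← List.map_cons, ← hbt,
          List.getLast?_map, hl, hanch]
        rfl
    · intro x hx y hy hxy a hax hay
      have hKxy : G'.connectedComponentMk x ≠ G'.connectedComponentMk y := by
        intro h
        exact hxy (mem_distinct G hG r Z parent hd hpar hZ hx hy
          (SimpleGraph.ConnectedComponent.exact h))
      obtain ⟨hhx, hlx, hcx, hrchx⟩ :=
        gchain_spec G r Z parent hd hpar hZ (rep (G'.connectedComponentMk x))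
      obtain ⟨hhy, hly, hcy, hrchy⟩ :=
        gchain_spec G r Z parent hd hpar hZ (rep (G'.connectedComponentMk y))
      have hmemX : ∀ w ∈ gchain G r Z parent hd (rep (G'.connectedComponentMk x)),
          G'.connectedComponentMk w = G'.connectedComponentMk x := by
        intro w hw
        have h1 := hrchx w hw
        have h2 : G'.connectedComponentMk (rep (G'.connectedComponentMk x)) =
            G'.connectedComponentMk x :=
          (SimpleGraph.ConnectedComponent.mem_supp_iff _ _).mp
            (hrep (G'.connectedComponentMk x)).2
        rw [← h2]
        exact SimpleGraph.ConnectedComponent.sound h1.symm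
      have hmemY : ∀ w ∈ gchain G r Z parent hd (rep (G'.connectedComponentMk y)),
          G'.connectedComponentMk w = G'.connectedComponentMk y := by
        intro w hw
        have h1 := hrchy w hw
        have h2 : G'.connectedComponentMk (rep (G'.connectedComponentMk y)) =
            G'.connectedComponentMk y :=
          (SimpleGraph.ConnectedComponent.mem_supp_iff _ _).mp
            (hrep (G'.connectedComponentMk y)).2
        rw [← h2]
        exact SimpleGraph.ConnectedComponent.sound h1.symm
      rcases List.mem_cons.mp hax with rfl | hax
      · rcases List.mem_cons.mp hay with h | h
        · have : idx (G'.connectedComponentMk x) = idx (G'.connectedComponentMk y) :=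
            Sum.inr.inj h
          exact hKxy (hinj this)
        · obtain ⟨w, _, hw⟩ := List.mem_map.mp h
          exact absurd hw (by simp)
      · obtain ⟨w, hwmem, rfl⟩ := List.mem_map.mp hax
        rcases List.mem_cons.mp hay with h | h
        · exact absurd h (by simp)
        · obtain ⟨w', hw'mem, hw'⟩ := List.mem_map.mp h
          have hww' : w' = w := Sum.inl.inj hw'
          rw [hww'] at hw'mem
          exact hKxy ((hmemX w hwmem).symm.trans (hmemY w hw'mem))
  · -- backward
    rintro ⟨P, hP1, hP2⟩
    have Q : ∀ x ∈ insert r Z, ∃ (i : Fin q) (v : V), (P x).head? = some (Sum.inr i) ∧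
        v ∈ T i ∧ G'.Reachable v x := by
      intro x hx
      obtain ⟨hcx, ⟨i, hhx⟩, hlx⟩ := hP1 x hx
      obtain ⟨a0, m, hm⟩ : ∃ a0 m, P x = a0 :: m := by
        cases hPx : P x with
        | nil => rw [hPx] at hhx; simp at hhx
        | cons a0 m => exact ⟨a0, m, rfl⟩
      have ha0 : a0 = Sum.inr i := by
        rw [hm, List.head?_cons] at hhx
        exact Option.some.inj hhx
      subst ha0
      match m, hm with
      | [], hm =>
        rw [hm] at hlx
        simp at hlx
      | b :: t, hm =>
        rw [hm, List.Chain', List.isChain_cons_cons] at hcx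
        obtain ⟨hab, hcm⟩ := hcx
        rw [hA] at hab
        rcases hab with ⟨v', _, hv', _⟩ | ⟨i', w, hwT, hii, hb⟩
        · exact absurd hv' (by simp)
        · have hTi : w ∈ T i := by rw [Sum.inr.inj hii]; exact hwT
          rw [hb] at hcm hm
          obtain ⟨l, hlmap, hlh, hlc⟩ := extract_chain r parent T A hA (Sum.inl w :: t) hcm w rfl
          rw [hm, List.getLast?_cons_cons, hlmap, List.getLast?_map] at hlx
          obtain ⟨x', hgl0, hx'eq⟩ : ∃ x', l.getLast? = some x' ∧ Sum.inl x' = Sum.inl x := by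
            cases hgl : l.getLast? with
            | none => rw [hgl] at hlx; simp at hlx
            | some w' =>
              rw [hgl] at hlx
              exact ⟨w', rfl, Option.some.inj hlx⟩
          have hgl : l.getLast? = some x := by rw [hgl0, Sum.inl.inj hx'eq]
          have hmem : ∀ a ∈ l, a ∈ Z → a = x := by
            intro a hal haZ
            by_contra hne
            have hax : Sum.inl a ∈ P x := by
              rw [hm]
              exact List.mem_cons_of_mem _ (by rw [hlmap]; exact List.mem_map_of_mem hal)
            have haa : Sum.inl a ∈ P a := by
              have hlast := (hP1 a (Finset.mem_insert_of_mem haZ)).2.2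
              obtain ⟨hne', heq⟩ := List.mem_getLast?_eq_getLast (show _ ∈ _ from hlast)
              rw [heq]
              exact List.getLast_mem hne'
            exact hP2 x hx a (Finset.mem_insert_of_mem haZ) (fun h => hne h.symm)
              (Sum.inl a) hax haa
          exact ⟨i, w, by rw [hm]; rfl, hTi,
            reach_of_chain G r Z parent hpar hZ l w x hlc hlh hgl hmem⟩
    choose ifn vfn hhead hT hreach using Q
    have htop1 : ∀ K : G'.ConnectedComponent,
        ganchor G r Z parent hd (Quot.out K) ∈ insert r Z := by
      intro K
      rcases ganchor_mem G r Z parent hd (Quot.out K) with h | h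
      · exact Finset.mem_insert_of_mem h
      · rw [h]; exact Finset.mem_insert_self _ _
    have htop2 : ∀ K : G'.ConnectedComponent,
        G'.connectedComponentMk (ganchor G r Z parent hd (Quot.out K)) = K := by
      intro K
      have hreach' : G'.Reachable (Quot.out K) (ganchor G r Z parent hd (Quot.out K)) :=
        ganchor_reachable G r Z parent hd hpar hZ (Quot.out K)
      have hout : G'.connectedComponentMk (Quot.out K) = K := Quot.out_eq K
      conv_rhs => rw [← hout]
      exact SimpleGraph.ConnectedComponent.sound hreach'.symm
    refine ⟨fun K => ifn _ (htop1 K), ?_, fun K => vfn _ (htop1 K), ?_⟩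
    · intro K K' hKK'
      by_cases htt : ganchor G r Z parent hd (Quot.out K) = ganchor G r Z parent hd (Quot.out K')
      · rw [← htop2 K, ← htop2 K', htt]
      · exfalso
        have hKK2 : ifn _ (htop1 K) = ifn _ (htop1 K') := hKK'
        refine hP2 _ (htop1 K) _ (htop1 K') htt (Sum.inr (ifn _ (htop1 K)))
          (List.mem_of_mem_head? (show _ ∈ _ from hhead _ (htop1 K))) ?_
        have hthis : (P (ganchor G r Z parent hd (Quot.out K'))).head? =
            some (Sum.inr (ifn _ (htop1 K))) := by
          rw [hKK2]
          exact hhead _ (htop1 K')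
        exact List.mem_of_mem_head? (show _ ∈ _ from hthis)
    · intro K
      refine ⟨hT _ (htop1 K), ?_⟩
      rw [SimpleGraph.ConnectedComponent.mem_supp_iff]
      conv_rhs => rw [← htop2 K]
      exact SimpleGraph.ConnectedComponent.sound (hreach _ (htop1 K))
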